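/- There exists a constant C > 0, depending only on δ, β_S, β_Ω, such that for all h ∈ (0,1/4) and all (r,z) with 0 < r < δ and 0 < z < h + γ_s(r): |Ψ(r,z)| ≤ C, |∂_zΨ(r,z)| ≤ C/(h+γ_s(r)), and |∂_rΨ(r,z)| ≤ C·r/(h+γ_s(r)). -/

import Mathlib

open Real MeasureTheory intervalIntegral

noncomputable section

/-- `γ_s(r) = 1 - √(1 - r²)`. -/
def gam (r : ℝ) : ℝ := 1 - Real.sqrt (1 - r ^ 2)

/-- `α_P(r) = (h + γ_s(r)) / β_Ω`. -/
def aP (βΩ h r : ℝ) : ℝ := (h + gam r) / βΩ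

/-- `α_S(r) = (1/β_S + 2) (h + γ_s(r))`. -/
def aS (βS h r : ℝ) : ℝ := (1 / βS + 2) * (h + gam r)

/-- The cubic `Φ(r,t) = P₁(r) t + P₂(r) t² + P₃(r) t³` of the slip case. -/
def Phi (βS βΩ h r t : ℝ) : ℝ :=
  6 * (2 + aS βS h r) / (12 + 4 * (aS βS h r + aP βΩ h r) + aS βS h r * aP βΩ h r) * t +
  3 * (2 + aS βS h r) * aP βΩ h r / (12 + 4 * (aS βS h r + aP βΩ h r) + aS βS h r * aP βΩ h r) * t ^ 2 +
  -(2 * (aS βS h r + aS βS h r * aP βΩ h r + aP βΩ h r)) / (12 + 4 * (aS βS h r + aP βΩ h r) + aS βS h r * aP βΩ h r) * t ^ 3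

/-- `Ψ(r,z) = Φ(r, z / (h + γ_s(r)))`. -/
def Psi (βS βΩ h r z : ℝ) : ℝ := Phi βS βΩ h r (z / (h + gam r))

/-- Partial derivative in the first (`r`) variable. -/
def dR (f : ℝ → ℝ → ℝ) : ℝ → ℝ → ℝ := fun r z => deriv (fun r' => f r' z) r

/-- Partial derivative in the second (`z`) variable. -/
def dZ (f : ℝ → ℝ → ℝ) : ℝ → ℝ → ℝ := fun r z => deriv (fun z' => f r z') z

def Nn1 (s H : ℝ) : ℝ := 6 * (2 + s * H)
def Nn2 (s p H : ℝ) : ℝ := 3 * (2 + s * H) * (p * H)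
def Nn3 (s p H : ℝ) : ℝ := -(2 * (s * H + s * H * (p * H) + p * H))
def Dd (s p H : ℝ) : ℝ := 12 + 4 * (s + p) * H + s * p * H ^ 2
def Qfun (s p H z : ℝ) : ℝ :=
  Nn1 s H / Dd s p H * (z / H) + Nn2 s p H / Dd s p H * (z / H) ^ 2 +
    Nn3 s p H / Dd s p H * (z / H) ^ 3

lemma Psi_eq (βS βΩ h r z : ℝ) :
    Psi βS βΩ h r z = Qfun (1 / βS + 2) (1 / βΩ) (h + gam r) z := by
  unfold Psi Phi Qfun Nn1 Nn2 Nn3 Dd aS aP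
  ring

lemma hasDerivAt_quad (a b c x : ℝ) :
    HasDerivAt (fun y => a + b * y + c * y ^ 2) (b + 2 * c * x) x := by
  have h := (((hasDerivAt_id x).const_mul b).const_add a).add ((hasDerivAt_pow 2 x).const_mul c)
  refine h.congr_deriv ?_
  push_cast; ring

lemma gam_hasDerivAt {r : ℝ} (h1 : r ^ 2 < 1) :
    HasDerivAt gam (r / Real.sqrt (1 - r ^ 2)) r := by
  have hpos : 0 < 1 - r ^ 2 := by linarith
  have hne : (1 - r ^ 2) ≠ 0 := ne_of_gt hpos
  have hs : HasDerivAt (fun x : ℝ => 1 - x ^ 2) (-(2 * r)) r := by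
    have := (hasDerivAt_pow 2 r).const_sub 1
    refine this.congr_deriv ?_; push_cast; ring
  have h2 := (Real.hasDerivAt_sqrt hne).comp r hs
  have h3 : HasDerivAt (fun x : ℝ => 1 - Real.sqrt (1 - x ^ 2))
      (-(1 / (2 * Real.sqrt (1 - r ^ 2)) * -(2 * r))) r := h2.const_sub 1
  have hsq : Real.sqrt (1 - r ^ 2) ≠ 0 := by positivity
  refine h3.congr_deriv ?_
  field_simp

-- derivative defs
def dNn1 (s : ℝ) : ℝ := 6 * s
def dNn2 (s p H : ℝ) : ℝ := 6 * p + 6 * s * p * H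
def dNn3 (s p H : ℝ) : ℝ := -(2 * (s + p)) - 4 * s * p * H
def dDd (s p H : ℝ) : ℝ := 4 * (s + p) + 2 * s * p * H
def dP1 (s p H : ℝ) : ℝ := (dNn1 s * Dd s p H - Nn1 s H * dDd s p H) / Dd s p H ^ 2
def dP2 (s p H : ℝ) : ℝ := (dNn2 s p H * Dd s p H - Nn2 s p H * dDd s p H) / Dd s p H ^ 2
def dP3 (s p H : ℝ) : ℝ := (dNn3 s p H * Dd s p H - Nn3 s p H * dDd s p H) / Dd s p H ^ 2

lemma hasDerivAt_Dd (s p H : ℝ) : HasDerivAt (fun x => Dd s p x) (dDd s p H) H := by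
  rw [show (fun x => Dd s p x) = fun y => 12 + 4 * (s + p) * y + (s * p) * y ^ 2 from
    funext fun y => by unfold Dd; ring]
  convert hasDerivAt_quad 12 (4 * (s + p)) (s * p) H using 1
  unfold dDd; ring

lemma hasDerivAt_Nn1 (s p H : ℝ) : HasDerivAt (fun x => Nn1 s x) (dNn1 s) H := by
  rw [show (fun x => Nn1 s x) = fun y => 12 + (6 * s) * y + 0 * y ^ 2 from
    funext fun y => by unfold Nn1; ring]
  convert hasDerivAt_quad 12 (6 * s) 0 H using 1
  unfold dNn1; ring

lemma hasDerivAt_Nn2 (s p H : ℝ) : HasDerivAt (fun x => Nn2 s p x) (dNn2 s p H) H := by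
  rw [show (fun x => Nn2 s p x) = fun y => 0 + (6 * p) * y + (3 * s * p) * y ^ 2 from
    funext fun y => by unfold Nn2; ring]
  convert hasDerivAt_quad 0 (6 * p) (3 * s * p) H using 1
  unfold dNn2; ring

lemma hasDerivAt_Nn3 (s p H : ℝ) : HasDerivAt (fun x => Nn3 s p x) (dNn3 s p H) H := by
  rw [show (fun x => Nn3 s p x) = fun y => 0 + (-(2 * (s + p))) * y + (-(2 * s * p)) * y ^ 2 from
    funext fun y => by unfold Nn3; ring]
  convert hasDerivAt_quad 0 (-(2 * (s + p))) (-(2 * s * p)) H using 1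
  unfold dNn3; ring

lemma hasDerivAt_P1 (s p H : ℝ) (hD : Dd s p H ≠ 0) :
    HasDerivAt (fun x => Nn1 s x / Dd s p x) (dP1 s p H) H :=
  (hasDerivAt_Nn1 s p H).div (hasDerivAt_Dd s p H) hD

lemma hasDerivAt_P2 (s p H : ℝ) (hD : Dd s p H ≠ 0) :
    HasDerivAt (fun x => Nn2 s p x / Dd s p x) (dP2 s p H) H :=
  (hasDerivAt_Nn2 s p H).div (hasDerivAt_Dd s p H) hD

lemma hasDerivAt_P3 (s p H : ℝ) (hD : Dd s p H ≠ 0) :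
    HasDerivAt (fun x => Nn3 s p x / Dd s p x) (dP3 s p H) H :=
  (hasDerivAt_Nn3 s p H).div (hasDerivAt_Dd s p H) hD

-- z-derivative of Qfun
lemma hasDerivAt_Q_z (s p H z : ℝ) :
    HasDerivAt (fun z' => Qfun s p H z')
      (Nn1 s H / Dd s p H * (1 / H) +
        Nn2 s p H / Dd s p H * ((2 : ℕ) * (z / H) ^ 1 * (1 / H)) +
        Nn3 s p H / Dd s p H * ((3 : ℕ) * (z / H) ^ 2 * (1 / H))) z := by
  have h1 : HasDerivAt (fun z' : ℝ => z' / H) (1 / H) z := (hasDerivAt_id z).div_const H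
  exact ((h1.const_mul _).add ((h1.pow 2).const_mul _)).add ((h1.pow 3).const_mul _)

-- H-derivative of Qfun
lemma hasDerivAt_Q_H (s p H z : ℝ) (hD : Dd s p H ≠ 0) (hH : H ≠ 0) :
    HasDerivAt (fun x => Qfun s p x z)
      (dP1 s p H * (z / H) + Nn1 s H / Dd s p H * (-(z / H ^ 2)) +
        (dP2 s p H * (z / H) ^ 2 +
          Nn2 s p H / Dd s p H * ((2 : ℕ) * (z / H) ^ 1 * (-(z / H ^ 2)))) +
        (dP3 s p H * (z / H) ^ 3 +
          Nn3 s p H / Dd s p H * ((3 : ℕ) * (z / H) ^ 2 * (-(z / H ^ 2))))) H := by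
  have hzr : HasDerivAt (fun x : ℝ => z / x) (-(z / H ^ 2)) H := by
    have := (hasDerivAt_const H z).div (hasDerivAt_id H) hH
    refine this.congr_deriv ?_; simp only [id]; ring
  exact (((hasDerivAt_P1 s p H hD).mul hzr).add
      ((hasDerivAt_P2 s p H hD).mul (hzr.pow 2))).add
      ((hasDerivAt_P3 s p H hD).mul (hzr.pow 3))

lemma abs_add3 (a b c : ℝ) : |a + b + c| ≤ |a| + |b| + |c| := by
  calc |a + b + c| ≤ |a + b| + |c| := abs_add_le _ _
    _ ≤ |a| + |b| + |c| := by linarith [abs_add_le a b]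

lemma key_bounds (s p H : ℝ) (hs : 0 < s) (hp : 0 < p) (hH0 : 0 < H) (hH2 : H ≤ 2) :
    |Nn1 s H / Dd s p H| ≤ (1 + s) * (1 + p) ∧
    |Nn2 s p H / Dd s p H| ≤ (1 + s) * (1 + p) ∧
    |Nn3 s p H / Dd s p H| ≤ (1 + s) * (1 + p) ∧
    |dP1 s p H| ≤ 2 * ((1 + s) * (1 + p)) ^ 2 ∧
    |dP2 s p H| ≤ 2 * ((1 + s) * (1 + p)) ^ 2 ∧
    |dP3 s p H| ≤ 2 * ((1 + s) * (1 + p)) ^ 2 := by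
  have hsp : (0:ℝ) ≤ s * p := by positivity
  have hsH : s * H ≤ s * 2 := mul_le_mul_of_nonneg_left hH2 hs.le
  have hpH : p * H ≤ p * 2 := mul_le_mul_of_nonneg_left hH2 hp.le
  have hspH : s * p * H ≤ s * p * 2 := mul_le_mul_of_nonneg_left hH2 hsp
  have hHsq : H ^ 2 ≤ 4 := by nlinarith
  have hspH2 : s * p * H ^ 2 ≤ s * p * 4 := mul_le_mul_of_nonneg_left hHsq hsp
  have hsH0 : (0:ℝ) ≤ s * H := by positivity
  have hpH0 : (0:ℝ) ≤ p * H := by positivity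
  have hspH0 : (0:ℝ) ≤ s * p * H := by positivity
  have hspH20 : (0:ℝ) ≤ s * p * H ^ 2 := by positivity
  have hE1 : (1:ℝ) ≤ (1 + s) * (1 + p) := by nlinarith [hsp]
  have hD12 : 12 ≤ Dd s p H := by unfold Dd; linarith
  have hDpos : 0 < Dd s p H := by linarith
  have hDup : Dd s p H ≤ 12 * ((1 + s) * (1 + p)) := by unfold Dd; linarith
  have hN1 : |Nn1 s H| ≤ 12 * ((1 + s) * (1 + p)) := by
    rw [abs_of_nonneg (by unfold Nn1; linarith)]; unfold Nn1; linarith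
  have hN2 : |Nn2 s p H| ≤ 12 * ((1 + s) * (1 + p)) := by
    rw [abs_of_nonneg (by unfold Nn2; linarith)]; unfold Nn2; linarith
  have hN3 : |Nn3 s p H| ≤ 12 * ((1 + s) * (1 + p)) := by
    rw [abs_of_nonpos (by unfold Nn3; linarith)]; unfold Nn3; linarith
  have hdN1 : |dNn1 s| ≤ 12 * ((1 + s) * (1 + p)) := by
    rw [abs_of_nonneg (by unfold dNn1; linarith)]; unfold dNn1; linarith
  have hdN2 : |dNn2 s p H| ≤ 12 * ((1 + s) * (1 + p)) := by
    rw [abs_of_nonneg (by unfold dNn2; linarith)]; unfold dNn2; linarith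
  have hdN3 : |dNn3 s p H| ≤ 12 * ((1 + s) * (1 + p)) := by
    rw [abs_of_nonpos (by unfold dNn3; linarith)]; unfold dNn3; linarith
  have hdD : |dDd s p H| ≤ 12 * ((1 + s) * (1 + p)) := by
    rw [abs_of_nonneg (by unfold dDd; linarith)]; unfold dDd; linarith
  have quot : ∀ N : ℝ, |N| ≤ 12 * ((1 + s) * (1 + p)) → |N / Dd s p H| ≤ (1 + s) * (1 + p) := by
    intro N hN
    rw [abs_div, abs_of_pos hDpos, div_le_iff₀ hDpos]
    linarith [abs_nonneg N, mul_le_mul_of_nonneg_left hD12 (le_trans zero_le_one hE1)]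
  have dquot : ∀ n N : ℝ, |n| ≤ 12 * ((1 + s) * (1 + p)) → |N| ≤ 12 * ((1 + s) * (1 + p)) →
      |(n * Dd s p H - N * dDd s p H) / Dd s p H ^ 2| ≤ 2 * ((1 + s) * (1 + p)) ^ 2 := by
    intro n N hn hN
    have hD2 : 0 < Dd s p H ^ 2 := by positivity
    rw [abs_div, abs_of_pos hD2, div_le_iff₀ hD2]
    have tri : |n * Dd s p H - N * dDd s p H| ≤ |n| * |Dd s p H| + |N| * |dDd s p H| := by
      calc |n * Dd s p H - N * dDd s p H| ≤ |n * Dd s p H| + |N * dDd s p H| := abs_sub _ _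
        _ = |n| * |Dd s p H| + |N| * |dDd s p H| := by rw [abs_mul, abs_mul]
    have hDabs : |Dd s p H| ≤ 12 * ((1 + s) * (1 + p)) := by rw [abs_of_pos hDpos]; exact hDup
    have h1 : |n| * |Dd s p H| ≤ (12 * ((1 + s) * (1 + p))) * (12 * ((1 + s) * (1 + p))) :=
      mul_le_mul hn hDabs (abs_nonneg _) (by positivity)
    have h2 : |N| * |dDd s p H| ≤ (12 * ((1 + s) * (1 + p))) * (12 * ((1 + s) * (1 + p))) :=
      mul_le_mul hN hdD (abs_nonneg _) (by positivity)
    have hD144 : (144:ℝ) ≤ Dd s p H ^ 2 := by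
      nlinarith [mul_nonneg (sub_nonneg.2 hD12) (show (0:ℝ) ≤ Dd s p H + 12 by linarith)]
    linarith [tri, h1, h2, mul_nonneg (sub_nonneg.2 hD144) (sq_nonneg ((1 + s) * (1 + p)))]
  exact ⟨quot _ hN1, quot _ hN2, quot _ hN3, dquot _ _ hdN1 hN1, dquot _ _ hdN2 hN2,
    dquot _ _ hdN3 hN3⟩

set_option maxHeartbeats 2000000 in
/-- Proposition A.1, first group of estimates (slip case). -/
theorem Psi_bounds_order_le_one (δ βS βΩ : ℝ) (hδ : δ ∈ Set.Ioo (0 : ℝ) (1 / 4))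
    (hβS : 0 < βS) (hβΩ : 0 < βΩ) :
    ∃ C : ℝ, 0 < C ∧ ∀ h ∈ Set.Ioo (0 : ℝ) (1 / 4), ∀ r z : ℝ,
      0 < r → r < δ → 0 < z → z < h + gam r →
      |Psi βS βΩ h r z| ≤ C ∧
      |dZ (Psi βS βΩ h) r z| ≤ C / (h + gam r) ∧
      |dR (Psi βS βΩ h) r z| ≤ C * r / (h + gam r) := by
  obtain ⟨hδ0, hδ4⟩ := hδ
  have hs : (0:ℝ) < 1 / βS + 2 := by positivity
  have hp : (0:ℝ) < 1 / βΩ := by positivity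
  set s : ℝ := 1 / βS + 2
  set p : ℝ := 1 / βΩ
  set E : ℝ := (1 + s) * (1 + p) with hE_def
  have hE1 : (1:ℝ) ≤ E := by linarith [mul_pos hs hp]
  have hE0 : (0:ℝ) ≤ E := by linarith
  have h2E2 : (0:ℝ) ≤ 2 * E ^ 2 := by positivity
  refine ⟨48 * E ^ 2 + 48 * E, by linarith [sq_nonneg E], ?_⟩
  rintro h ⟨hh0, hh4⟩ r z hr0 hrδ hz0 hzH
  have hr4 : r < 1 / 4 := lt_trans hrδ hδ4
  have hr2 : r ^ 2 < 1 := by nlinarith [sq_nonneg r]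
  have hsq_pos : 0 < Real.sqrt (1 - r ^ 2) := Real.sqrt_pos.2 (by linarith)
  have hsq_le1 : Real.sqrt (1 - r ^ 2) ≤ 1 := Real.sqrt_le_one.2 (by linarith [sq_nonneg r])
  have hsq_half : (1:ℝ) / 2 ≤ Real.sqrt (1 - r ^ 2) := by
    have h14 : Real.sqrt ((1:ℝ) / 4) ≤ Real.sqrt (1 - r ^ 2) := Real.sqrt_le_sqrt (by nlinarith [sq_nonneg r, mul_pos hr0 hr0])
    rwa [show ((1:ℝ) / 4) = (1 / 2 : ℝ) ^ 2 by norm_num, Real.sqrt_sq (by norm_num)] at h14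
  have hgam0 : 0 ≤ gam r := by unfold gam; linarith
  have hgam1 : gam r ≤ 1 := by unfold gam; linarith
  have hH0 : 0 < h + gam r := by linarith
  have hH2 : h + gam r ≤ 2 := by linarith
  have hHne : h + gam r ≠ 0 := ne_of_gt hH0
  obtain ⟨hA1, hA2, hA3, hB1, hB2, hB3⟩ := key_bounds s p (h + gam r) hs hp hH0 hH2
  have hD12 : 12 ≤ Dd s p (h + gam r) := by
    unfold Dd
    nlinarith [mul_nonneg (mul_nonneg hs.le hp.le) (sq_nonneg (h + gam r)),
      mul_nonneg (by positivity : (0:ℝ) ≤ s + p) hH0.le]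
  have hDne : Dd s p (h + gam r) ≠ 0 := by linarith
  -- bounds on t = z / H and u = z / H²
  have ht0 : 0 ≤ z / (h + gam r) := div_nonneg hz0.le hH0.le
  have ht1 : z / (h + gam r) ≤ 1 := (div_le_one hH0).2 hzH.le
  have ht2 : (z / (h + gam r)) ^ 2 ≤ 1 := pow_le_one₀ ht0 ht1
  have ht3 : (z / (h + gam r)) ^ 3 ≤ 1 := pow_le_one₀ ht0 ht1
  have hu0 : 0 ≤ z / (h + gam r) ^ 2 := div_nonneg hz0.le (sq_nonneg _)
  have hinvH : (0:ℝ) < 1 / (h + gam r) := div_pos one_pos hH0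
  refine ⟨?_, ?_, ?_⟩
  · -- bound on Psi
    rw [Psi_eq]
    unfold Qfun
    have e1 : |Nn1 s (h + gam r) / Dd s p (h + gam r) * (z / (h + gam r))| ≤ E := by
      rw [abs_mul, abs_of_nonneg ht0]
      simpa using mul_le_mul hA1 ht1 ht0 hE0
    have e2 : |Nn2 s p (h + gam r) / Dd s p (h + gam r) * (z / (h + gam r)) ^ 2| ≤ E := by
      rw [abs_mul, abs_pow, abs_of_nonneg ht0]
      simpa using mul_le_mul hA2 ht2 (pow_nonneg ht0 2) hE0
    have e3 : |Nn3 s p (h + gam r) / Dd s p (h + gam r) * (z / (h + gam r)) ^ 3| ≤ E := by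
      rw [abs_mul, abs_pow, abs_of_nonneg ht0]
      simpa using mul_le_mul hA3 ht3 (pow_nonneg ht0 3) hE0
    calc |Nn1 s (h + gam r) / Dd s p (h + gam r) * (z / (h + gam r)) +
          Nn2 s p (h + gam r) / Dd s p (h + gam r) * (z / (h + gam r)) ^ 2 +
          Nn3 s p (h + gam r) / Dd s p (h + gam r) * (z / (h + gam r)) ^ 3|
        ≤ _ + _ + _ := abs_add3 _ _ _
      _ ≤ E + E + E := by linarith
      _ ≤ 48 * E ^ 2 + 48 * E := by linarith [sq_nonneg E]
  · -- bound on dZ Psi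
    have hfun : (fun z' => Psi βS βΩ h r z') = fun z' => Qfun s p (h + gam r) z' :=
      funext fun z' => Psi_eq βS βΩ h r z'
    have hd := (hasDerivAt_Q_z s p (h + gam r) z).deriv
    unfold dZ
    rw [hfun, hd]
    push_cast
    have e1 : |Nn1 s (h + gam r) / Dd s p (h + gam r) * (1 / (h + gam r))| ≤
        E * (1 / (h + gam r)) := by
      rw [abs_mul, abs_of_pos hinvH]
      exact mul_le_mul_of_nonneg_right hA1 hinvH.le
    have e2 : |Nn2 s p (h + gam r) / Dd s p (h + gam r) *
        (2 * (z / (h + gam r)) ^ 1 * (1 / (h + gam r)))| ≤ E * (2 * (1 / (h + gam r))) := by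
      rw [abs_mul]
      have hx : |2 * (z / (h + gam r)) ^ 1 * (1 / (h + gam r))| ≤ 2 * (1 / (h + gam r)) := by
        rw [abs_of_nonneg (mul_nonneg (mul_nonneg (by norm_num) (pow_nonneg ht0 1)) hinvH.le)]
        have := mul_le_mul_of_nonneg_right (pow_le_one₀ ht0 ht1 (n := 1)) hinvH.le
        linarith
      exact mul_le_mul hA2 hx (abs_nonneg _) hE0
    have e3 : |Nn3 s p (h + gam r) / Dd s p (h + gam r) *
        (3 * (z / (h + gam r)) ^ 2 * (1 / (h + gam r)))| ≤ E * (3 * (1 / (h + gam r))) := by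
      rw [abs_mul]
      have hx : |3 * (z / (h + gam r)) ^ 2 * (1 / (h + gam r))| ≤ 3 * (1 / (h + gam r)) := by
        rw [abs_of_nonneg (mul_nonneg (mul_nonneg (by norm_num) (pow_nonneg ht0 2)) hinvH.le)]
        have := mul_le_mul_of_nonneg_right ht2 hinvH.le
        linarith
      exact mul_le_mul hA3 hx (abs_nonneg _) hE0
    calc |Nn1 s (h + gam r) / Dd s p (h + gam r) * (1 / (h + gam r)) +
          Nn2 s p (h + gam r) / Dd s p (h + gam r) *
            (2 * (z / (h + gam r)) ^ 1 * (1 / (h + gam r))) +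
          Nn3 s p (h + gam r) / Dd s p (h + gam r) *
            (3 * (z / (h + gam r)) ^ 2 * (1 / (h + gam r)))|
        ≤ _ + _ + _ := abs_add3 _ _ _
      _ ≤ E * (1 / (h + gam r)) + E * (2 * (1 / (h + gam r))) + E * (3 * (1 / (h + gam r))) := by
          linarith
      _ = (6 * E) * (1 / (h + gam r)) := by ring
      _ ≤ (48 * E ^ 2 + 48 * E) * (1 / (h + gam r)) := by
          apply mul_le_mul_of_nonneg_right _ hinvH.le
          linarith [sq_nonneg E]
      _ = (48 * E ^ 2 + 48 * E) / (h + gam r) := by ring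
  · -- bound on dR Psi
    have hG : HasDerivAt (fun r' => h + gam r') (r / Real.sqrt (1 - r ^ 2)) r :=
      (gam_hasDerivAt hr2).const_add h
    have hF := hasDerivAt_Q_H s p (h + gam r) z hDne hHne
    have hcomp := hF.comp r hG
    have hfun : (fun r' => Psi βS βΩ h r' z) =
        ((fun x => Qfun s p x z) ∘ fun r' => h + gam r') :=
      funext fun r' => Psi_eq βS βΩ h r' z
    unfold dR
    rw [hfun, hcomp.deriv]
    have hg0 : 0 ≤ r / Real.sqrt (1 - r ^ 2) := div_nonneg hr0.le (Real.sqrt_nonneg _)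
    have hg2 : r / Real.sqrt (1 - r ^ 2) ≤ 2 * r := by
      rw [div_le_iff₀ hsq_pos]
      linarith [mul_le_mul_of_nonneg_left hsq_half hr0.le]
    set t : ℝ := z / (h + gam r) with ht_def
    set u : ℝ := z / (h + gam r) ^ 2 with hu_def
    have f1 : |dP1 s p (h + gam r) * t| ≤ 2 * E ^ 2 := by
      rw [abs_mul, abs_of_nonneg ht0]
      simpa using mul_le_mul hB1 ht1 ht0 h2E2
    have f2 : |Nn1 s (h + gam r) / Dd s p (h + gam r) * (-u)| ≤ E * u := by
      rw [abs_mul, abs_neg, abs_of_nonneg hu0]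
      exact mul_le_mul_of_nonneg_right hA1 hu0
    have f3 : |dP2 s p (h + gam r) * t ^ 2| ≤ 2 * E ^ 2 := by
      rw [abs_mul, abs_pow, abs_of_nonneg ht0]
      simpa using mul_le_mul hB2 ht2 (pow_nonneg ht0 2) h2E2
    have f4 : |Nn2 s p (h + gam r) / Dd s p (h + gam r) * ((2:ℕ) * t ^ 1 * (-u))| ≤
        E * (2 * u) := by
      rw [abs_mul]
      have hx : |(2:ℕ) * t ^ 1 * (-u)| ≤ 2 * u := by
        push_cast
        rw [show (2:ℝ) * t ^ 1 * (-u) = -(2 * (t * u)) by ring, abs_neg,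
          abs_of_nonneg (by positivity)]
        have := mul_le_mul_of_nonneg_right ht1 hu0
        linarith
      exact mul_le_mul hA2 hx (abs_nonneg _) hE0
    have f5 : |dP3 s p (h + gam r) * t ^ 3| ≤ 2 * E ^ 2 := by
      rw [abs_mul, abs_pow, abs_of_nonneg ht0]
      simpa using mul_le_mul hB3 ht3 (pow_nonneg ht0 3) h2E2
    have f6 : |Nn3 s p (h + gam r) / Dd s p (h + gam r) * ((3:ℕ) * t ^ 2 * (-u))| ≤
        E * (3 * u) := by
      rw [abs_mul]
      have hx : |(3:ℕ) * t ^ 2 * (-u)| ≤ 3 * u := by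
        push_cast
        rw [show (3:ℝ) * t ^ 2 * (-u) = -(3 * (t ^ 2 * u)) by ring, abs_neg,
          abs_of_nonneg (by positivity)]
        have := mul_le_mul_of_nonneg_right ht2 hu0
        linarith
      exact mul_le_mul hA3 hx (abs_nonneg _) hE0
    have hV : |dP1 s p (h + gam r) * t + Nn1 s (h + gam r) / Dd s p (h + gam r) * (-u) +
        (dP2 s p (h + gam r) * t ^ 2 +
          Nn2 s p (h + gam r) / Dd s p (h + gam r) * ((2:ℕ) * t ^ 1 * (-u))) +
        (dP3 s p (h + gam r) * t ^ 3 +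
          Nn3 s p (h + gam r) / Dd s p (h + gam r) * ((3:ℕ) * t ^ 2 * (-u)))|
        ≤ 6 * E ^ 2 + 6 * (E * u) := by
      have s1 := abs_add_le (dP1 s p (h + gam r) * t)
        (Nn1 s (h + gam r) / Dd s p (h + gam r) * (-u))
      have s2 := abs_add_le (dP2 s p (h + gam r) * t ^ 2)
        (Nn2 s p (h + gam r) / Dd s p (h + gam r) * ((2:ℕ) * t ^ 1 * (-u)))
      have s3 := abs_add_le (dP3 s p (h + gam r) * t ^ 3)
        (Nn3 s p (h + gam r) / Dd s p (h + gam r) * ((3:ℕ) * t ^ 2 * (-u)))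
      have step1 := abs_add3 (dP1 s p (h + gam r) * t +
          Nn1 s (h + gam r) / Dd s p (h + gam r) * (-u))
        (dP2 s p (h + gam r) * t ^ 2 +
          Nn2 s p (h + gam r) / Dd s p (h + gam r) * ((2:ℕ) * t ^ 1 * (-u)))
        (dP3 s p (h + gam r) * t ^ 3 +
          Nn3 s p (h + gam r) / Dd s p (h + gam r) * ((3:ℕ) * t ^ 2 * (-u)))
      linarith
    rw [abs_mul, abs_of_nonneg hg0]
    have hEu : 0 ≤ E * u := mul_nonneg hE0 hu0
    have huH : u * (h + gam r) ≤ 1 := by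
      rw [hu_def, div_mul_eq_mul_div, div_le_one (pow_pos hH0 2)]
      have := mul_le_mul_of_nonneg_right hzH.le hH0.le
      nlinarith [this]
    calc _ ≤ (6 * E ^ 2 + 6 * (E * u)) * (2 * r) :=
          mul_le_mul hV hg2 hg0 (by linarith [sq_nonneg E, hEu])
      _ ≤ (48 * E ^ 2 + 48 * E) * r / (h + gam r) := by
          have key : (48 * E ^ 2 + 48 * E) * r / (h + gam r) -
              (6 * E ^ 2 + 6 * (E * u)) * (2 * r) =
              ((48 * E ^ 2 + 48 * E) -
                (12 * E ^ 2 * (h + gam r) + 12 * E * (u * (h + gam r)))) * r / (h + gam r) := by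
            field_simp
            ring
          have h1 : 12 * E ^ 2 * (h + gam r) ≤ 12 * E ^ 2 * 2 :=
            mul_le_mul_of_nonneg_left hH2 (by positivity)
          have h2 : 12 * E * (u * (h + gam r)) ≤ 12 * E * 1 :=
            mul_le_mul_of_nonneg_left huH (by positivity)
          have hbr : (0:ℝ) ≤ (48 * E ^ 2 + 48 * E) -
              (12 * E ^ 2 * (h + gam r) + 12 * E * (u * (h + gam r))) := by
            linarith [h1, h2, sq_nonneg E]
          have := div_nonneg (mul_nonneg hbr hr0.le) hH0.le
          linarith [key, this]
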